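/- Let (F_t)_{t∈ℕ} be a filtration, (Y_t)_{t≥1} an adapted sequence of random variables with |Y_t| ≤ b and E[Y_t | F_{t−1}] = 0, and (w_t)_{t≥1} a predictable sequence of weights with w_t ∈ [0,1]. Set S_t = Σ_{s=1}^t w_s Y_s and V_t = Σ_{s=1}^t w_s² E[Y_s² | F_{s−1}]. Then for every δ > 0, with probability at least 1 − δ, simultaneously for all t ≥ 1: |S_t| ≤ √( 2 V_t log(4e(2t+1)/δ) ) + 3 b log(4e(2t+1)/δ). -/

import Mathlib

open Finset MeasureTheory


/-- Quadratic bound on `exp`: for `|z| ≤ x ≤ 1`, `exp z ≤ 1 + z + (1/2 + 2/9·x) z²`. -/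
lemma exp_quad_bound {z x : ℝ} (hz : |z| ≤ x) (hx : x ≤ 1) :
    Real.exp z ≤ 1 + z + (1/2 + 2/9 * x) * z ^ 2 := by
  have hz1 : |z| ≤ 1 := hz.trans hx
  have h := Real.exp_bound hz1 (n := 3) (by norm_num)
  have hsum : ∑ i ∈ Finset.range 3, z ^ i / i.factorial = 1 + z + z ^ 2 / 2 := by
    simp [Finset.sum_range_succ, Nat.factorial]
  rw [hsum] at h
  have h2 : Real.exp z ≤ 1 + z + z ^ 2 / 2 + |z| ^ 3 * (4 / 18) := by
    have := abs_le.mp h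
    have hn : (3 : ℕ).succ = 4 := rfl
    have : Real.exp z - (1 + z + z ^ 2 / 2) ≤ |z| ^ 3 * ((3:ℕ).succ / ((3:ℕ).factorial * 3)) :=
      (le_abs_self _).trans h
    norm_num [Nat.factorial] at this
    linarith
  have h3 : |z| ^ 3 ≤ x * z ^ 2 := by
    have : |z| ^ 3 = |z| * z ^ 2 := by
      rw [pow_succ, sq_abs]; ring
    rw [this]
    exact mul_le_mul_of_nonneg_right hz (sq_nonneg z)
  nlinarith [sq_nonneg z]


/-- Ville's inequality (finite time): for a nonnegative supermartingale `f`,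
`μ {∃ k ≤ n, ε ≤ f k} ≤ E[f 0] / ε`. -/
lemma ville_fin {Ω : Type*} {m0 : MeasurableSpace Ω} {μ : Measure Ω} [IsFiniteMeasure μ]
    {𝒢 : Filtration ℕ m0} {f : ℕ → Ω → ℝ} (hf : Supermartingale f 𝒢 μ)
    (hnonneg : ∀ k ω, 0 ≤ f k ω) {ε : ℝ} (hε : 0 < ε) (n : ℕ) :
    μ {ω | ∃ k ≤ n, ε ≤ f k ω} ≤ ENNReal.ofReal ((∫ ω, f 0 ω ∂μ) / ε) := by
  set σ : Ω → ℕ∞ := fun ω => (hittingBtwn f {y : ℝ | ε ≤ y} 0 n ω : ℕ) with hσdef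
  have hσ : IsStoppingTime 𝒢 σ := hf.stronglyAdapted.adapted.isStoppingTime_hittingBtwn measurableSet_Ici
  have hσle : ∀ ω, σ ω ≤ n := fun ω => WithTop.coe_le_coe.mpr (hittingBtwn_le ω)
  -- integrability of the stopped value
  have hint : Integrable (stoppedValue f σ) μ := by
    have h := (hf.neg.integrable_stoppedValue hσ hσle).neg
    have : -stoppedValue (-f) σ = stoppedValue f σ := by
      funext ω; simp [stoppedValue]
    rwa [this] at h
  -- expectation of stopped value ≤ expectation of f 0
  have hexp : ∫ ω, stoppedValue f σ ω ∂μ ≤ ∫ ω, f 0 ω ∂μ := by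
    have h := hf.neg.expected_stoppedValue_mono (isStoppingTime_const 𝒢 0) hσ
      (fun ω => WithTop.coe_le_coe.mpr (Nat.zero_le _)) hσle
    rw [stoppedValue_const] at h
    have h1 : ∫ ω, stoppedValue (-f) σ ω ∂μ = - ∫ ω, stoppedValue f σ ω ∂μ := by
      rw [← integral_neg]
      rfl
    have h2 : ∫ ω, (-f) 0 ω ∂μ = - ∫ ω, f 0 ω ∂μ := by
      rw [← integral_neg]; rfl
    rw [h1, h2] at h
    linarith
  -- the event is measurable
  have hEmeas : MeasurableSet {ω | ∃ k ≤ n, ε ≤ f k ω} := by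
    have : {ω | ∃ k ≤ n, ε ≤ f k ω} = ⋃ k ∈ Finset.range (n+1), {ω | ε ≤ f k ω} := by
      ext ω; simp [Nat.lt_succ_iff]
    rw [this]
    refine MeasurableSet.biUnion (Finset.range (n+1)).countable_toSet fun k _ => ?_
    exact measurableSet_le measurable_const
      ((hf.stronglyMeasurable k).measurable.le (𝒢.le k))
  -- on the event, the stopped value is at least ε
  have hbig : ∀ ω ∈ {ω | ∃ k ≤ n, ε ≤ f k ω}, ε ≤ stoppedValue f σ ω := by
    intro ω hω
    obtain ⟨k, hk, hfk⟩ := hω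
    refine stoppedValue_hittingBtwn_mem ?_
    exact ⟨k, ⟨Nat.zero_le _, hk⟩, hfk⟩
  have h1 : ε * (μ {ω | ∃ k ≤ n, ε ≤ f k ω}).toReal
      ≤ ∫ ω in {ω | ∃ k ≤ n, ε ≤ f k ω}, stoppedValue f σ ω ∂μ :=
    setIntegral_ge_of_const_le_real hEmeas (measure_ne_top _ _) hbig hint.integrableOn
  have h2 : ∫ ω in {ω | ∃ k ≤ n, ε ≤ f k ω}, stoppedValue f σ ω ∂μ
      ≤ ∫ ω, stoppedValue f σ ω ∂μ := by
    refine setIntegral_le_integral hint (Filter.Eventually.of_forall fun ω => ?_)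
    exact hnonneg _ ω
  rw [ENNReal.le_ofReal_iff_toReal_le (measure_ne_top _ _)]
  · rw [le_div_iff₀ hε]
    calc (μ _).toReal * ε = ε * (μ _).toReal := by ring
    _ ≤ _ := h1.trans (h2.trans hexp)
  · have h0 : 0 ≤ ∫ ω, f 0 ω ∂μ := integral_nonneg fun ω => hnonneg 0 ω
    positivity

/-- One-sided exponential supermartingale bound. -/
lemma one_sided
    {Ω : Type*} {m0 : MeasurableSpace Ω} (μ : Measure Ω) [IsProbabilityMeasure μ]
    (ℱ : Filtration ℕ m0) (b : ℝ) (hb : 0 < b)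
    (Y w : ℕ → Ω → ℝ)
    (hYadapted : ∀ t, 1 ≤ t → StronglyMeasurable[ℱ t] (Y t))
    (hYbdd : ∀ t ω, |Y t ω| ≤ b)
    (hYcentered : ∀ t, 1 ≤ t → μ[Y t | ℱ (t - 1)] =ᵐ[μ] 0)
    (hwpred : ∀ t, 1 ≤ t → StronglyMeasurable[ℱ (t - 1)] (w t))
    (hw01 : ∀ t ω, w t ω ∈ Set.Icc (0 : ℝ) 1)
    (l : ℝ) (hl : 0 ≤ l) (hlb : l * b ≤ 1) (A : ℝ) :
    μ {ω | ∃ k, A < l * (∑ s ∈ Finset.Icc 1 k, w s ω * Y s ω)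
        - (1/2 + 2/9 * (l * b)) * l ^ 2 * (∑ s ∈ Finset.Icc 1 k,
            (w s ω) ^ 2 * (μ[(fun ω' => (Y s ω') ^ 2) | ℱ (s - 1)]) ω)}
      ≤ ENNReal.ofReal (Real.exp (-A)) := by
  set c : ℝ := 1/2 + 2/9 * (l * b) with hc
  have hc0 : 0 ≤ c := by positivity
  set S : ℕ → Ω → ℝ := fun k ω => ∑ s ∈ Finset.Icc 1 k, w s ω * Y s ω with hS
  set V : ℕ → Ω → ℝ := fun k ω => ∑ s ∈ Finset.Icc 1 k,
      (w s ω) ^ 2 * (μ[(fun ω' => (Y s ω') ^ 2) | ℱ (s - 1)]) ω with hV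
  set M : ℕ → Ω → ℝ := fun k ω => Real.exp (l * S k ω - c * l ^ 2 * V k ω) with hM
  have hMpos : ∀ k ω, 0 < M k ω := fun k ω => Real.exp_pos _
  -- measurability
  have hwb : ∀ s ω, |w s ω| ≤ 1 := fun s ω => by
    have := hw01 s ω; rw [abs_le]; constructor <;> [linarith [this.1]; exact this.2]
  have hSmeas : ∀ k, StronglyMeasurable[ℱ k] (S k) := by
    intro k
    refine Finset.stronglyMeasurable_fun_sum _ fun s hs => ?_
    obtain ⟨hs1, hs2⟩ := Finset.mem_Icc.mp hs
    exact ((hwpred s hs1).mono (ℱ.mono ((Nat.sub_le s 1).trans hs2))).mul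
      ((hYadapted s hs1).mono (ℱ.mono hs2))
  have hVmeas : ∀ k, StronglyMeasurable[ℱ k] (V k) := by
    intro k
    refine Finset.stronglyMeasurable_fun_sum _ fun s hs => ?_
    obtain ⟨hs1, hs2⟩ := Finset.mem_Icc.mp hs
    exact (((hwpred s hs1).mono (ℱ.mono ((Nat.sub_le s 1).trans hs2))).pow 2).mul
      (stronglyMeasurable_condExp.mono (ℱ.mono ((Nat.sub_le s 1).trans hs2)))
  have hMmeas : ∀ k, StronglyMeasurable[ℱ k] (M k) := by
    intro k
    exact (Real.continuous_exp.comp_stronglyMeasurable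
      (((hSmeas k).const_mul l).sub ((hVmeas k).const_mul (c * l ^ 2))))
  -- a.e. nonnegativity of the conditional variances
  have hq0 : ∀ s : ℕ, 0 ≤ᵐ[μ] μ[(fun ω' => (Y s ω') ^ 2) | ℱ (s - 1)] := fun s =>
    condExp_nonneg (Filter.Eventually.of_forall fun ω => sq_nonneg _)
  have hVae : ∀ k, ∀ᵐ ω ∂μ, 0 ≤ V k ω := by
    intro k
    have : ∀ᵐ ω ∂μ, ∀ s : ℕ, 0 ≤ (μ[(fun ω' => (Y s ω') ^ 2) | ℱ (s - 1)]) ω :=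
      MeasureTheory.ae_all_iff.mpr fun s => hq0 s
    filter_upwards [this] with ω hω
    exact Finset.sum_nonneg fun s _ => mul_nonneg (sq_nonneg _) (hω s)
  -- pointwise bound on S
  have hSbdd : ∀ k ω, |S k ω| ≤ k * b := by
    intro k ω
    calc |S k ω| ≤ ∑ s ∈ Finset.Icc 1 k, |w s ω * Y s ω| := Finset.abs_sum_le_sum_abs _ _
    _ ≤ ∑ s ∈ Finset.Icc 1 k, b := by
        refine Finset.sum_le_sum fun s _ => ?_
        rw [abs_mul]
        calc |w s ω| * |Y s ω| ≤ 1 * b :=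
          mul_le_mul (hwb s ω) (hYbdd s ω) (abs_nonneg _) zero_le_one
        _ = b := one_mul b
    _ ≤ k * b := by
        rw [Finset.sum_const, nsmul_eq_mul]
        have : (Finset.Icc 1 k).card ≤ k := by
          rw [Nat.card_Icc]; omega
        refine mul_le_mul_of_nonneg_right ?_ hb.le
        exact_mod_cast this
  -- integrability of M
  have hMint : ∀ k, Integrable (M k) μ := by
    intro k
    refine Integrable.mono' (integrable_const (Real.exp (l * (k * b)))) 
      ((hMmeas k).mono (ℱ.le k)).aestronglyMeasurable ?_
    filter_upwards [hVae k] with ω hV0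
    rw [Real.norm_eq_abs, abs_of_pos (hMpos k ω)]
    refine Real.exp_le_exp.mpr ?_
    have h1 : l * S k ω ≤ l * (k * b) :=
      mul_le_mul_of_nonneg_left ((le_abs_self _).trans (hSbdd k ω)) hl
    nlinarith [mul_nonneg (mul_nonneg hc0 (sq_nonneg l)) hV0]
  -- the supermartingale property
  have hstep : ∀ k, μ[M (k + 1) | ℱ k] ≤ᵐ[μ] M k := by
    intro k
    have hk1 : (1 : ℕ) ≤ k + 1 := Nat.le_add_left 1 k
    set q : Ω → ℝ := μ[(fun ω' => (Y (k+1) ω') ^ 2) | ℱ k] with hqdef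
    have hqsm : StronglyMeasurable[ℱ k] q := stronglyMeasurable_condExp
    have hwk : StronglyMeasurable[ℱ k] (w (k+1)) := hwpred (k+1) hk1
    have hYk : StronglyMeasurable[ℱ (k+1)] (Y (k+1)) := hYadapted (k+1) hk1
    have hYkm : AEStronglyMeasurable (Y (k+1)) μ := (hYk.mono (ℱ.le _)).aestronglyMeasurable
    have hYint : Integrable (Y (k+1)) μ :=
      Integrable.mono' (integrable_const b) hYkm
        (Filter.Eventually.of_forall fun ω => by
          rw [Real.norm_eq_abs]; exact hYbdd _ ω)
    have hY2int : Integrable (fun ω => (Y (k+1) ω) ^ 2) μ :=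
      Integrable.mono' (integrable_const (b ^ 2))
        (hYkm.pow 2)
        (Filter.Eventually.of_forall fun ω => by
          rw [Real.norm_eq_abs, abs_pow, ← sq_abs b]
          exact pow_le_pow_left₀ (abs_nonneg _) ((hYbdd _ ω).trans (le_abs_self b)) 2)
    -- decomposition of M (k+1)
    have hdec : M (k+1) = (fun ω => M k ω * Real.exp (-(c * l ^ 2) * ((w (k+1) ω) ^ 2 * q ω)))
        * (fun ω => Real.exp (l * (w (k+1) ω * Y (k+1) ω))) := by
      funext ω
      have hSsucc : S (k+1) ω = S k ω + w (k+1) ω * Y (k+1) ω :=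
        Finset.sum_Icc_succ_top hk1 _
      have hVsucc : V (k+1) ω = V k ω + (w (k+1) ω) ^ 2 * q ω :=
        Finset.sum_Icc_succ_top hk1 _
      simp only [hM, Pi.mul_apply]
      rw [← Real.exp_add, ← Real.exp_add, hSsucc, hVsucc]
      ring_nf
    set G : Ω → ℝ := fun ω => M k ω * Real.exp (-(c * l ^ 2) * ((w (k+1) ω) ^ 2 * q ω)) with hGdef
    have hGmeas : StronglyMeasurable[ℱ k] G :=
      (hMmeas k).mul (Real.continuous_exp.comp_stronglyMeasurable
        (((hwk.pow 2).mul hqsm).const_mul (-(c * l ^ 2))))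
    have hGpos : ∀ ω, 0 < G ω := fun ω => mul_pos (hMpos k ω) (Real.exp_pos _)
    have hexpint : Integrable (fun ω => Real.exp (l * (w (k+1) ω * Y (k+1) ω))) μ := by
      refine Integrable.mono' (integrable_const (Real.exp (l * b)))
        (Real.continuous_exp.comp_aestronglyMeasurable
          ((((hwk.mono (ℱ.le k)).mul (hYk.mono (ℱ.le (k+1)))).const_mul l).aestronglyMeasurable))
        (Filter.Eventually.of_forall fun ω => ?_)
      rw [Real.norm_eq_abs, abs_of_pos (Real.exp_pos _), Real.exp_le_exp]
      refine mul_le_mul_of_nonneg_left ?_ hl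
      calc w (k+1) ω * Y (k+1) ω ≤ |w (k+1) ω * Y (k+1) ω| := le_abs_self _
      _ = |w (k+1) ω| * |Y (k+1) ω| := abs_mul _ _
      _ ≤ 1 * b := mul_le_mul (hwb _ ω) (hYbdd _ ω) (abs_nonneg _) zero_le_one
      _ = b := one_mul b
    have hprodint : Integrable (G * fun ω => Real.exp (l * (w (k+1) ω * Y (k+1) ω))) μ := by
      rw [← hdec]; exact hMint (k+1)
    have hpull : μ[M (k+1) | ℱ k]
        =ᵐ[μ] G * μ[(fun ω => Real.exp (l * (w (k+1) ω * Y (k+1) ω))) | ℱ k] := by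
      rw [hdec]
      exact condExp_mul_of_stronglyMeasurable_left hGmeas hprodint hexpint
    -- pointwise quadratic bound
    have hptw : ∀ ω, Real.exp (l * (w (k+1) ω * Y (k+1) ω))
        ≤ 1 + (l * w (k+1) ω) * Y (k+1) ω
          + (c * l ^ 2 * (w (k+1) ω) ^ 2) * (Y (k+1) ω) ^ 2 := by
      intro ω
      have habs : |l * (w (k+1) ω * Y (k+1) ω)| ≤ l * b := by
        rw [abs_mul, abs_of_nonneg hl, abs_mul]
        refine mul_le_mul_of_nonneg_left ?_ hl
        calc |w (k+1) ω| * |Y (k+1) ω| ≤ 1 * b :=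
          mul_le_mul (hwb _ ω) (hYbdd _ ω) (abs_nonneg _) zero_le_one
        _ = b := one_mul b
      have := exp_quad_bound habs hlb
      calc Real.exp (l * (w (k+1) ω * Y (k+1) ω))
          ≤ 1 + l * (w (k+1) ω * Y (k+1) ω)
            + (1/2 + 2/9 * (l * b)) * (l * (w (k+1) ω * Y (k+1) ω)) ^ 2 := this
      _ = 1 + (l * w (k+1) ω) * Y (k+1) ω
            + (c * l ^ 2 * (w (k+1) ω) ^ 2) * (Y (k+1) ω) ^ 2 := by rw [hc]; ring
    have hz_int : Integrable (fun ω => (l * w (k+1) ω) * Y (k+1) ω) μ := by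
      refine Integrable.mono' (integrable_const (l * b))
        (((hwk.mono (ℱ.le k)).const_mul l).aestronglyMeasurable.mul hYkm)
        (Filter.Eventually.of_forall fun ω => ?_)
      rw [Real.norm_eq_abs, abs_mul, abs_mul, abs_of_nonneg hl, mul_assoc]
      refine mul_le_mul_of_nonneg_left ?_ hl
      calc |w (k+1) ω| * |Y (k+1) ω| ≤ 1 * b :=
        mul_le_mul (hwb _ ω) (hYbdd _ ω) (abs_nonneg _) zero_le_one
      _ = b := one_mul b
    have hq_int : Integrable (fun ω => (c * l ^ 2 * (w (k+1) ω) ^ 2) * (Y (k+1) ω) ^ 2) μ := by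
      have : Integrable (fun ω => (c * l ^ 2 * (w (k+1) ω) ^ 2) * (Y (k+1) ω) ^ 2) μ := by
        refine Integrable.mono' (integrable_const (c * l ^ 2 * b ^ 2))
          ((((hwk.mono (ℱ.le k)).pow 2).const_mul (c * l ^ 2)).aestronglyMeasurable.mul
            (hYkm.pow 2))
          (Filter.Eventually.of_forall fun ω => ?_)
        rw [Real.norm_eq_abs, abs_mul]
        have h1 : |c * l ^ 2 * w (k+1) ω ^ 2| ≤ c * l ^ 2 := by
          rw [abs_mul, abs_of_nonneg (by positivity : (0:ℝ) ≤ c * l ^ 2), abs_pow]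
          have hw2 : |w (k+1) ω| ^ 2 ≤ 1 := by
            nlinarith [hwb (k+1) ω, abs_nonneg (w (k+1) ω)]
          nlinarith [mul_nonneg hc0 (sq_nonneg l)]
        have h2 : |(Y (k+1) ω) ^ 2| ≤ b ^ 2 := by
          rw [abs_pow, ← sq_abs b]
          exact pow_le_pow_left₀ (abs_nonneg _) ((hYbdd _ ω).trans (le_abs_self b)) 2
        calc |c * l ^ 2 * w (k+1) ω ^ 2| * |(Y (k+1) ω) ^ 2| ≤ (c * l ^ 2) * b ^ 2 :=
          mul_le_mul h1 h2 (abs_nonneg _) (by positivity)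
        _ = c * l ^ 2 * b ^ 2 := rfl
      exact this
    have hRHSint : Integrable (fun ω => 1 + (l * w (k+1) ω) * Y (k+1) ω
        + (c * l ^ 2 * (w (k+1) ω) ^ 2) * (Y (k+1) ω) ^ 2) μ :=
      ((integrable_const 1).add hz_int).add hq_int
    have hmono2 : μ[(fun ω => Real.exp (l * (w (k+1) ω * Y (k+1) ω))) | ℱ k]
        ≤ᵐ[μ] μ[(fun ω => 1 + (l * w (k+1) ω) * Y (k+1) ω
          + (c * l ^ 2 * (w (k+1) ω) ^ 2) * (Y (k+1) ω) ^ 2) | ℱ k] :=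
      condExp_mono hexpint hRHSint (Filter.Eventually.of_forall hptw)
    -- compute the conditional expectation of the RHS
    have e1 : μ[(fun ω => (l * w (k+1) ω) * Y (k+1) ω) | ℱ k] =ᵐ[μ] 0 := by
      have h := condExp_mul_of_stronglyMeasurable_left (m := ℱ k) (μ := μ)
        (f := fun ω => l * w (k+1) ω) (g := Y (k+1)) (hwk.const_mul l)
        (by exact hz_int) hYint
      refine h.trans ?_
      have hcent : μ[Y (k+1) | ℱ k] =ᵐ[μ] 0 := hYcentered (k+1) hk1
      filter_upwards [hcent] with ω hω
      simp [hω]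
    have e2 : μ[(fun ω => (c * l ^ 2 * (w (k+1) ω) ^ 2) * (Y (k+1) ω) ^ 2) | ℱ k]
        =ᵐ[μ] fun ω => (c * l ^ 2 * (w (k+1) ω) ^ 2) * q ω := by
      have h := condExp_mul_of_stronglyMeasurable_left (m := ℱ k) (μ := μ)
        (f := fun ω => c * l ^ 2 * (w (k+1) ω) ^ 2) (g := fun ω => (Y (k+1) ω) ^ 2)
        ((hwk.pow 2).const_mul (c * l ^ 2)) (by exact hq_int) hY2int
      exact h
    have e3 : μ[(fun ω => 1 + (l * w (k+1) ω) * Y (k+1) ω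
        + (c * l ^ 2 * (w (k+1) ω) ^ 2) * (Y (k+1) ω) ^ 2) | ℱ k]
        =ᵐ[μ] fun ω => 1 + (c * l ^ 2 * (w (k+1) ω) ^ 2) * q ω := by
      have h := condExp_add (μ := μ) (m := ℱ k) ((integrable_const (1:ℝ)).add hz_int) hq_int
      refine h.trans ?_
      have h2 := condExp_add (μ := μ) (m := ℱ k) (integrable_const (1:ℝ)) hz_int
      have h3 : μ[(fun _ : Ω => (1:ℝ)) | ℱ k] = fun _ => (1:ℝ) := condExp_const (ℱ.le k) 1
      filter_upwards [h2, e1, e2] with ω hω2 hω1 hω22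
      have h3' : (μ[(fun _ : Ω => (1:ℝ)) | ℱ k]) ω = 1 := by rw [h3]
      simp only [Pi.add_apply] at hω2 ⊢
      simp only [Pi.zero_apply] at hω1
      linarith [hω2, hω22, h3', hω1]
    -- combine
    have hfinal : μ[M (k + 1) | ℱ k] ≤ᵐ[μ] M k := by
      filter_upwards [hpull, hmono2, e3, hq0 (k+1)] with ω h1 h2 h3 h4
      have hq0' : 0 ≤ q ω := h4
      set x : ℝ := c * l ^ 2 * ((w (k+1) ω) ^ 2 * q ω) with hx
      have hx0 : 0 ≤ x := by positivity
      have hEle : (μ[(fun ω => Real.exp (l * (w (k+1) ω * Y (k+1) ω))) | ℱ k]) ω ≤ 1 + x := by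
        refine h2.trans ?_
        rw [h3]; rw [hx]; ring_nf; exact le_refl _
      calc (μ[M (k+1) | ℱ k]) ω
          = G ω * (μ[(fun ω => Real.exp (l * (w (k+1) ω * Y (k+1) ω))) | ℱ k]) ω := h1
      _ ≤ G ω * (1 + x) := mul_le_mul_of_nonneg_left hEle (hGpos ω).le
      _ = M k ω * (Real.exp (-x) * (1 + x)) := by rw [hGdef]; simp only; rw [hx]; ring_nf
      _ ≤ M k ω * 1 := by
          refine mul_le_mul_of_nonneg_left ?_ (hMpos k ω).le
          have h5 : (1 + x) ≤ Real.exp x := by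
            have := Real.add_one_le_exp x; linarith
          calc Real.exp (-x) * (1 + x) ≤ Real.exp (-x) * Real.exp x :=
            mul_le_mul_of_nonneg_left h5 (Real.exp_pos _).le
          _ = 1 := by rw [← Real.exp_add]; simp
      _ = M k ω := mul_one _
    exact hfinal
  -- assemble the supermartingale and apply Ville's inequality
  have hsuper : Supermartingale M ℱ μ := supermartingale_nat (fun k => hMmeas k) hMint hstep
  have hM0 : ∫ ω, M 0 ω ∂μ = 1 := by
    have : M 0 = fun _ => (1 : ℝ) := by
      funext ω
      simp [hM, hS, hV, Finset.Icc_eq_empty (by omega : ¬ (1:ℕ) ≤ 0)]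
    rw [this]
    simp
  have hsub : {ω | ∃ k, A < l * S k ω - c * l ^ 2 * V k ω}
      ⊆ ⋃ n : ℕ, {ω | ∃ k ≤ n, Real.exp A ≤ M k ω} := by
    intro ω hω
    obtain ⟨k, hk⟩ := hω
    refine Set.mem_iUnion.mpr ⟨k, k, le_refl k, ?_⟩
    rw [hM]
    exact Real.exp_le_exp.mpr hk.le
  have hmonoE : Monotone fun n => {ω | ∃ k ≤ n, Real.exp A ≤ M k ω} := by
    intro n m hnm ω hω
    obtain ⟨k, hk, hk2⟩ := hω
    exact ⟨k, hk.trans hnm, hk2⟩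
  calc μ {ω | ∃ k, A < l * S k ω - c * l ^ 2 * V k ω}
      ≤ μ (⋃ n : ℕ, {ω | ∃ k ≤ n, Real.exp A ≤ M k ω}) := measure_mono hsub
  _ = ⨆ n : ℕ, μ {ω | ∃ k ≤ n, Real.exp A ≤ M k ω} :=
      hmonoE.directed_le.measure_iUnion
  _ ≤ ENNReal.ofReal (Real.exp (-A)) := by
      refine iSup_le fun n => ?_
      have h := ville_fin hsuper (fun k ω => (hMpos k ω).le) (Real.exp_pos A) n
      rw [hM0] at h
      have hA : Real.exp (-A) = 1 / Real.exp A := by rw [Real.exp_neg, one_div]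
      rwa [hA]

set_option maxHeartbeats 1000000 in
/-- The analytic "grid" lemma: if the supermartingale bounds hold along the grid
`l n = 1/(b(n+1))`, then the explicit Bernstein bound holds. -/
lemma grid_bound {b δ : ℝ} (hb : 0 < b) (hδ : 0 < δ) (hδ1 : δ ≤ 1)
    {t : ℕ} (ht : 1 ≤ t) {V s : ℝ} (hV0 : 0 ≤ V) (hVt : V ≤ (t : ℝ) * b ^ 2)
    (h : ∀ n : ℕ, (1/(b*((n:ℝ)+1))) * s
        - (1/2 + 2/9 * ((1/(b*((n:ℝ)+1))) * b)) * (1/(b*((n:ℝ)+1)))^2 * V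
        ≤ Real.log (4 * Real.exp 1 * (12*(n:ℝ)^2+1) / δ)) :
    s ≤ Real.sqrt (2 * V * Real.log (4 * Real.exp 1 * (2 * (t:ℝ) + 1) / δ))
        + 3 * b * Real.log (4 * Real.exp 1 * (2 * (t:ℝ) + 1) / δ) := by
  have he : (0:ℝ) < Real.exp 1 := Real.exp_pos 1
  set L : ℝ := Real.log (4 * Real.exp 1 * (2 * (t:ℝ) + 1) / δ) with hL
  -- L ≥ 3
  have hL3 : 3 ≤ L := by
    have h1 : Real.exp 3 ≤ 4 * Real.exp 1 * (2 * (t:ℝ) + 1) / δ := by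
      have ht1 : (1:ℝ) ≤ (t:ℝ) := by exact_mod_cast ht
      have h2 : Real.exp 3 = Real.exp 1 * Real.exp 1 * Real.exp 1 := by
        rw [← Real.exp_add, ← Real.exp_add]; norm_num
      have h3 : Real.exp 1 < 2.7182818286 := Real.exp_one_lt_d9
      have h4 : Real.exp 3 ≤ 12 * Real.exp 1 := by
        rw [h2]; nlinarith [he]
      have h5 : (12:ℝ) * Real.exp 1 ≤ 4 * Real.exp 1 * (2 * (t:ℝ) + 1) := by nlinarith
      have h6 : 4 * Real.exp 1 * (2 * (t:ℝ) + 1) ≤ 4 * Real.exp 1 * (2 * (t:ℝ) + 1) / δ := by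
        rw [le_div_iff₀ hδ]; nlinarith
      linarith
    calc (3:ℝ) = Real.log (Real.exp 3) := (Real.log_exp 3).symm
    _ ≤ L := Real.log_le_log (Real.exp_pos 3) h1
  have hLpos : 0 < L := by linarith
  set R : ℝ := Real.sqrt (2 * V * L) with hR
  have hR0 : 0 ≤ R := Real.sqrt_nonneg _
  have hlog_le : ∀ n : ℕ, 12*(n:ℝ)^2 ≤ 2*(t:ℝ) →
      Real.log (4 * Real.exp 1 * (12*(n:ℝ)^2+1) / δ) ≤ L := by
    intro n hn
    refine Real.log_le_log (by positivity) ?_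
    have h1 : (12*(n:ℝ)^2+1) ≤ 2*(t:ℝ)+1 := by linarith
    have h2 : (0:ℝ) < 4 * Real.exp 1 := by positivity
    rw [div_le_div_iff₀ (by positivity) (by positivity)]
    have h3 := mul_le_mul_of_nonneg_left h1 h2.le
    nlinarith [mul_le_mul_of_nonneg_right h3 hδ.le]
  clear_value L
  -- extract the usable inequality from `h n`
  have key : ∀ n : ℕ, s ≤ (1/2) * ((1/(b*((n:ℝ)+1))) * V)
      + (2/9) * ((1/(b*((n:ℝ)+1)))^2 * (b*V))
      + Real.log (4 * Real.exp 1 * (12*(n:ℝ)^2+1) / δ) * (b*((n:ℝ)+1)) := by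
    intro n
    set d : ℝ := b*((n:ℝ)+1) with hd
    have hdpos : 0 < d := by positivity
    set u : ℝ := 1/d with hu
    have hud : u * d = 1 := by rw [hu]; field_simp
    have h2 := mul_le_mul_of_nonneg_right (h n) hdpos.le
    have e : (u * s - (1/2 + 2/9 * (u * b)) * u^2 * V) * d
        = s * (u*d) - (1/2) * (u * V) * (u*d) - (2/9) * (u^2 * (b*V)) * (u*d) := by ring
    rw [hud] at e
    simp only [mul_one] at e
    rw [e] at h2
    linarith
  by_cases hcase : V ≤ 2 * L * b ^ 2
  · -- small variance: use n = 0
    have h0 := key 0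
    simp only [Nat.cast_zero] at h0
    have hlog0 := hlog_le 0 (by
      have ht1 : (1:ℝ) ≤ (t:ℝ) := by exact_mod_cast ht
      push_cast
      nlinarith)
    simp only [Nat.cast_zero] at hlog0
    have hb1 : b * ((0:ℝ)+1) = b := by ring
    rw [hb1] at h0
    have e1 : (1/b) * V ≤ 2 * L * b := by
      rw [div_mul_eq_mul_div, div_le_iff₀ hb]
      nlinarith
    have e2 : (1/b)^2 * (b*V) ≤ 2 * L * b := by
      have hq : (1/b)^2 * (b*V) = (1/b) * V := by field_simp
      rw [hq]; exact e1
    have e3 : Real.log (4 * Real.exp 1 * (12*(0:ℝ)^2+1) / δ) * b ≤ L * b :=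
      mul_le_mul_of_nonneg_right hlog0 hb.le
    have hs3 : s ≤ 3 * b * L := by nlinarith
    nlinarith [hR0]
  · -- large variance: pick the grid point
    push_neg at hcase
    have hVpos : 0 < V := by nlinarith [sq_nonneg b]
    set r : ℝ := Real.sqrt (V / (2*L)) with hr
    have hrpos : 0 < r := Real.sqrt_pos.mpr (by positivity)
    have hr2 : r^2 = V / (2*L) := Real.sq_sqrt (by positivity)
    have hbr : b < r := by
      rw [hr, show b = Real.sqrt (b^2) from (Real.sqrt_sq hb.le).symm]
      apply Real.sqrt_lt_sqrt (sq_nonneg b)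
      rw [lt_div_iff₀ (by positivity)]
      nlinarith
    have hrR : r * R = V := by
      rw [hr, hR, ← Real.sqrt_mul (by positivity)]
      rw [show V / (2*L) * (2*V*L) = V^2 by field_simp]
      exact Real.sqrt_sq hVpos.le
    have hr2' : r^2 * (2*L) = V := by
      rw [hr2]; field_simp
    have hLr : 2*L*r = R := by
      have h1 : (2*L*r)^2 = 2*V*L := by linear_combination 2*L*hr2'
      rw [hR, ← h1, Real.sqrt_sq (by positivity)]
    set n : ℕ := ⌊r/b⌋₊ with hn
    have hn1 : (n:ℝ) ≤ r/b := Nat.floor_le (by positivity)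
    have hn2 : r/b < (n:ℝ)+1 := Nat.lt_floor_add_one _
    have hbn : b*(n:ℝ) ≤ r := by rw [← le_div_iff₀' hb]; exact hn1
    have hrd : r < b*((n:ℝ)+1) := by rw [← div_lt_iff₀' hb]; exact hn2
    have hlogn : Real.log (4 * Real.exp 1 * (12*(n:ℝ)^2+1) / δ) ≤ L := by
      refine hlog_le n ?_
      have hn2' : (n:ℝ)^2 ≤ (r/b)^2 := by
        have h0 : (0:ℝ) ≤ (n:ℝ) := Nat.cast_nonneg n
        nlinarith
      have hq : (r/b)^2 = V / (2*L*b^2) := by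
        rw [div_pow, hr2]; field_simp; try ring
      rw [hq] at hn2'
      have hVt' : V / (2*L*b^2) ≤ (t:ℝ)/(2*L) := by
        rw [div_le_div_iff₀ (by positivity) (by positivity)]
        nlinarith
      have h6 : (n:ℝ)^2 ≤ (t:ℝ)/(2*L) := hn2'.trans hVt'
      have h7 : (n:ℝ)^2 * (2*L) ≤ (t:ℝ) := by
        rw [← le_div_iff₀ (by positivity)]; exact h6
      nlinarith
    have hkn := key n
    set d : ℝ := b*((n:ℝ)+1) with hd
    have hdpos : 0 < d := by positivity
    -- bound the three terms
    have hT1 : (1/2) * ((1/d) * V) ≤ R / 2 := by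
      have h1 : (1/d) * V ≤ (1/r) * V := by
        apply mul_le_mul_of_nonneg_right _ hV0
        exact one_div_le_one_div_of_le hrpos hrd.le
      have h2 : (1/r) * V = R := by
        rw [← hrR]; field_simp
      linarith
    have hT2 : (2/9) * ((1/d)^2 * (b*V)) ≤ (4/9) * (b*L) := by
      have h1 : (1/d)^2 ≤ (1/r)^2 := by
        have hle := one_div_le_one_div_of_le hrpos hrd.le
        nlinarith [one_div_pos.mpr hdpos, one_div_pos.mpr hrpos]
      have h2 : (1/r)^2 * (b*V) = 2*L*b := by
        have hVr2 : V / r^2 = 2*L := by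
          rw [hr2]; field_simp
        have : (1/r)^2 * (b*V) = b * (V / r^2) := by field_simp; try ring
        rw [this, hVr2]; ring
      have h3 : (1/d)^2 * (b*V) ≤ 2*L*b := by
        calc (1/d)^2 * (b*V) ≤ (1/r)^2 * (b*V) := by
              apply mul_le_mul_of_nonneg_right h1 (by positivity)
        _ = 2*L*b := h2
      nlinarith
    have hT3 : Real.log (4 * Real.exp 1 * (12*(n:ℝ)^2+1) / δ) * d ≤ R/2 + b*L := by
      have h1 : Real.log (4 * Real.exp 1 * (12*(n:ℝ)^2+1) / δ) * d ≤ L * d := by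
        apply mul_le_mul_of_nonneg_right hlogn hdpos.le
      have h2 : L * d ≤ L * (r + b) := by
        apply mul_le_mul_of_nonneg_left _ hLpos.le
        rw [hd]; nlinarith
      have h3 : L * (r + b) = R/2 + b*L := by
        have : L * r = R / 2 := by linarith [hLr]
        nlinarith [this]
      linarith
    have hbL : 0 < b * L := by positivity
    calc s ≤ (1/2) * ((1/d) * V) + (2/9) * ((1/d)^2 * (b*V))
          + Real.log (4 * Real.exp 1 * (12*(n:ℝ)^2+1) / δ) * d := hkn
    _ ≤ R/2 + (4/9)*(b*L) + (R/2 + b*L) := by linarith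
    _ ≤ R + 3 * b * L := by linarith



lemma partial_sum_bound (δ : ℝ) (hδ : 0 < δ) (N : ℕ) :
    ∑ n ∈ Finset.range N, δ / (4 * Real.exp 1 * (12*(n:ℝ)^2+1)) ≤ δ / 2 := by
  have he : (0:ℝ) < Real.exp 1 := Real.exp_pos 1
  have he2 : (2:ℝ) ≤ Real.exp 1 := by
    have := Real.add_one_le_exp 1; linarith
  have key : ∀ M : ℕ, ∑ n ∈ Finset.range (M+1), δ / (4 * Real.exp 1 * (12*(n:ℝ)^2+1))
      ≤ δ / (4 * Real.exp 1) * (7/6 - (1/6) * (1/((M:ℝ)+1))) := by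
    intro M
    induction M with
    | zero =>
      simp only [Finset.range_one, Finset.sum_singleton, Nat.cast_zero]
      norm_num
    | succ M ih =>
      rw [Finset.sum_range_succ]
      have hc1 : ((M+1:ℕ):ℝ) = (M:ℝ)+1 := by push_cast; ring
      rw [hc1]
      set x : ℝ := (M:ℝ) + 1 with hx
      have hx1 : (1:ℝ) ≤ x := by
        rw [hx]; have := Nat.cast_nonneg (α := ℝ) M; linarith
      have hxpos : (0:ℝ) < x := by linarith
      have hstep : δ / (4 * Real.exp 1 * (12*x^2+1))
          ≤ δ / (4 * Real.exp 1) * ((1/6) * (1/x - 1/(x+1))) := by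
        have e1 : 1/x - 1/(x+1) = 1/(x*(x+1)) := by
          field_simp
          ring
        rw [e1]
        have e2 : δ / (4 * Real.exp 1) * ((1/6) * (1/(x*(x+1))))
            = δ / (4 * Real.exp 1 * (6*(x*(x+1)))) := by
          field_simp
          try ring
        rw [e2]
        apply div_le_div_of_nonneg_left hδ.le (by positivity)
        have h6 : 6*(x*(x+1)) ≤ 12*x^2+1 := by nlinarith
        nlinarith [mul_le_mul_of_nonneg_left h6 (by positivity : (0:ℝ) ≤ 4*Real.exp 1)]
      linarith [ih, hstep]
  cases N with
  | zero => simp; positivity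
  | succ M =>
    refine (key M).trans ?_
    have h1 : (0:ℝ) < (M:ℝ) + 1 := by positivity
    have h2 : (0:ℝ) ≤ 1/((M:ℝ)+1) := by positivity
    have h3 : δ / (4 * Real.exp 1) * (7/6 - (1/6) * (1/((M:ℝ)+1))) ≤ δ / (4 * Real.exp 1) * (7/6) := by
      apply mul_le_mul_of_nonneg_left _ (by positivity)
      linarith
    refine h3.trans ?_
    rw [div_mul_eq_mul_div, div_le_div_iff₀ (by positivity) (by norm_num)]
    nlinarith

lemma tsum_bound (δ : ℝ) (hδ : 0 < δ) :
    ∑' n : ℕ, ENNReal.ofReal (δ / (4 * Real.exp 1 * (12*(n:ℝ)^2+1))) ≤ ENNReal.ofReal (δ/2) := by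
  rw [ENNReal.tsum_eq_iSup_sum]
  refine iSup_le fun F => ?_
  rw [← ENNReal.ofReal_sum_of_nonneg (fun n _ => by positivity)]
  refine ENNReal.ofReal_le_ofReal ?_
  obtain ⟨N, hN⟩ := F.exists_nat_subset_range
  calc ∑ n ∈ F, δ / (4 * Real.exp 1 * (12*(n:ℝ)^2+1))
      ≤ ∑ n ∈ Finset.range N, δ / (4 * Real.exp 1 * (12*(n:ℝ)^2+1)) :=
        Finset.sum_le_sum_of_subset_of_nonneg hN (fun n _ _ => by positivity)
  _ ≤ δ / 2 := partial_sum_bound δ hδ N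

set_option maxHeartbeats 1000000 in
/-- explicit form of the self-normalized Bernstein inequality. For an
adapted sequence `(Y t)` with `|Y t| ≤ b` and `E[Y t | ℱ (t−1)] = 0`, predictable
weights `w t ∈ [0,1]`, `S_t = Σ_{s=1}^t w_s Y_s` and
`V_t = Σ_{s=1}^t w_s² E[Y_s² | ℱ (s−1)]`, with probability at least `1 − δ`,
simultaneously for all `t ≥ 1`,
`|S_t| ≤ √(2 V_t log(4e(2t+1)/δ)) + 3 b log(4e(2t+1)/δ)`. -/
theorem bernstein_self_normalized_explicit
    {Ω : Type*} {m0 : MeasurableSpace Ω} (μ : Measure Ω) [IsProbabilityMeasure μ]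
    (ℱ : Filtration ℕ m0) (b : ℝ) (hb : 0 < b)
    (Y w : ℕ → Ω → ℝ)
    (hYadapted : ∀ t, 1 ≤ t → StronglyMeasurable[ℱ t] (Y t))
    (hYbdd : ∀ t ω, |Y t ω| ≤ b)
    (hYcentered : ∀ t, 1 ≤ t → μ[Y t | ℱ (t - 1)] =ᵐ[μ] 0)
    (hwpred : ∀ t, 1 ≤ t → StronglyMeasurable[ℱ (t - 1)] (w t))
    (hw01 : ∀ t ω, w t ω ∈ Set.Icc (0 : ℝ) 1)
    (δ : ℝ) (hδ : 0 < δ) :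
    ENNReal.ofReal (1 - δ) ≤
      μ {ω | ∀ t : ℕ, 1 ≤ t →
        |∑ s ∈ Finset.Icc 1 t, w s ω * Y s ω|
          ≤ Real.sqrt (2 * (∑ s ∈ Finset.Icc 1 t,
                (w s ω) ^ 2 * (μ[(fun ω' => (Y s ω') ^ 2) | ℱ (s - 1)]) ω)
              * Real.log (4 * Real.exp 1 * (2 * (t : ℝ) + 1) / δ))
            + 3 * b * Real.log (4 * Real.exp 1 * (2 * (t : ℝ) + 1) / δ)} := by
  by_cases hδ1 : 1 < δ
  · rw [ENNReal.ofReal_of_nonpos (by linarith)]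
    exact zero_le
  push_neg at hδ1
  -- grid parameters
  set l : ℕ → ℝ := fun n => 1/(b*((n:ℝ)+1)) with hldef
  set A : ℕ → ℝ := fun n => Real.log (4 * Real.exp 1 * (12*(n:ℝ)^2+1) / δ) with hAdef
  have hl0 : ∀ n, 0 ≤ l n := fun n => by positivity
  have hlb : ∀ n, l n * b ≤ 1 := by
    intro n
    rw [hldef]
    have h1 : (0:ℝ) < (n:ℝ)+1 := by positivity
    rw [show 1/(b*((n:ℝ)+1)) * b = 1/((n:ℝ)+1) by field_simp]
    rw [div_le_one h1]
    linarith
  -- the negated process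
  set Y' : ℕ → Ω → ℝ := fun t ω => -(Y t ω) with hY'def
  have hY'adapted : ∀ t, 1 ≤ t → StronglyMeasurable[ℱ t] (Y' t) := fun t ht =>
    (hYadapted t ht).neg
  have hY'bdd : ∀ t ω, |Y' t ω| ≤ b := fun t ω => by
    rw [hY'def]; simpa [abs_neg] using hYbdd t ω
  have hY'centered : ∀ t, 1 ≤ t → μ[Y' t | ℱ (t - 1)] =ᵐ[μ] 0 := by
    intro t ht
    have h1 : Y' t = -(Y t) := rfl
    rw [h1]
    refine (condExp_neg _ _).trans ?_
    filter_upwards [hYcentered t ht] with ω hω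
    simp [hω]
  -- the bad events
  set Bp : ℕ → Set Ω := fun n => {ω | ∃ k, A n < l n * (∑ s ∈ Finset.Icc 1 k, w s ω * Y s ω)
        - (1/2 + 2/9 * (l n * b)) * (l n) ^ 2 * (∑ s ∈ Finset.Icc 1 k,
            (w s ω) ^ 2 * (μ[(fun ω' => (Y s ω') ^ 2) | ℱ (s - 1)]) ω)} with hBpdef
  set Bm : ℕ → Set Ω := fun n => {ω | ∃ k, A n < l n * (∑ s ∈ Finset.Icc 1 k, w s ω * Y' s ω)
        - (1/2 + 2/9 * (l n * b)) * (l n) ^ 2 * (∑ s ∈ Finset.Icc 1 k,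
            (w s ω) ^ 2 * (μ[(fun ω' => (Y' s ω') ^ 2) | ℱ (s - 1)]) ω)} with hBmdef
  have hBp : ∀ n, μ (Bp n) ≤ ENNReal.ofReal (Real.exp (-(A n))) := fun n =>
    one_sided μ ℱ b hb Y w hYadapted hYbdd hYcentered hwpred hw01 (l n) (hl0 n) (hlb n) (A n)
  have hBm : ∀ n, μ (Bm n) ≤ ENNReal.ofReal (Real.exp (-(A n))) := fun n =>
    one_sided μ ℱ b hb Y' w hY'adapted hY'bdd hY'centered hwpred hw01 (l n) (hl0 n) (hlb n) (A n)
  -- value of exp(-A n)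
  have hA : ∀ n : ℕ, Real.exp (-(A n)) = δ / (4 * Real.exp 1 * (12*(n:ℝ)^2+1)) := by
    intro n
    rw [hAdef]
    rw [Real.exp_neg, Real.exp_log (by positivity), inv_div]
  -- measurability of the bad events
  have hwm : ∀ s : ℕ, 1 ≤ s → Measurable (w s) := fun s hs =>
    ((hwpred s hs).mono (ℱ.le _)).measurable
  have hYm : ∀ s : ℕ, 1 ≤ s → Measurable (Y s) := fun s hs =>
    ((hYadapted s hs).mono (ℱ.le _)).measurable
  have hSm : ∀ (Z : ℕ → Ω → ℝ), (∀ s:ℕ, 1 ≤ s → Measurable (Z s)) → ∀ k : ℕ,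
      Measurable (fun ω => ∑ s ∈ Finset.Icc 1 k, w s ω * Z s ω) := by
    intro Z hZ k
    refine Finset.measurable_sum _ fun s hs => ?_
    obtain ⟨hs1, _⟩ := Finset.mem_Icc.mp hs
    exact (hwm s hs1).mul (hZ s hs1)
  have hVm : ∀ (Z : ℕ → Ω → ℝ), ∀ k : ℕ,
      Measurable (fun ω => ∑ s ∈ Finset.Icc 1 k,
        (w s ω) ^ 2 * (μ[(fun ω' => (Z s ω') ^ 2) | ℱ (s - 1)]) ω) := by
    intro Z k
    refine Finset.measurable_sum _ fun s hs => ?_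
    obtain ⟨hs1, _⟩ := Finset.mem_Icc.mp hs
    exact ((hwm s hs1).pow_const 2).mul
      ((stronglyMeasurable_condExp.mono (ℱ.le _)).measurable)
  have hBpm : ∀ n, MeasurableSet (Bp n) := by
    intro n
    have : Bp n = ⋃ k : ℕ, {ω | A n < l n * (∑ s ∈ Finset.Icc 1 k, w s ω * Y s ω)
        - (1/2 + 2/9 * (l n * b)) * (l n) ^ 2 * (∑ s ∈ Finset.Icc 1 k,
            (w s ω) ^ 2 * (μ[(fun ω' => (Y s ω') ^ 2) | ℱ (s - 1)]) ω)} := by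
      rw [hBpdef]; ext ω; simp [Set.mem_iUnion]
    rw [this]
    refine MeasurableSet.iUnion fun k => ?_
    exact measurableSet_lt measurable_const
      ((((hSm Y hYm k).const_mul (l n)).sub (((hVm Y k).const_mul _))))
  have hY'm : ∀ s : ℕ, 1 ≤ s → Measurable (Y' s) := fun s hs => (hYm s hs).neg
  have hBmm : ∀ n, MeasurableSet (Bm n) := by
    intro n
    have : Bm n = ⋃ k : ℕ, {ω | A n < l n * (∑ s ∈ Finset.Icc 1 k, w s ω * Y' s ω)
        - (1/2 + 2/9 * (l n * b)) * (l n) ^ 2 * (∑ s ∈ Finset.Icc 1 k,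
            (w s ω) ^ 2 * (μ[(fun ω' => (Y' s ω') ^ 2) | ℱ (s - 1)]) ω)} := by
      rw [hBmdef]; ext ω; simp [Set.mem_iUnion]
    rw [this]
    refine MeasurableSet.iUnion fun k => ?_
    exact measurableSet_lt measurable_const
      ((((hSm Y' hY'm k).const_mul (l n)).sub (((hVm Y' k).const_mul _))))
  -- the a.e. variance bounds
  have hPae : ∀ᵐ ω ∂μ, ∀ s : ℕ, 1 ≤ s →
      (0 ≤ (μ[(fun ω' => (Y s ω') ^ 2) | ℱ (s - 1)]) ω ∧
        (μ[(fun ω' => (Y s ω') ^ 2) | ℱ (s - 1)]) ω ≤ b ^ 2) := by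
    rw [MeasureTheory.ae_all_iff]
    intro s
    by_cases hs : 1 ≤ s
    · have h1 : 0 ≤ᵐ[μ] μ[(fun ω' => (Y s ω') ^ 2) | ℱ (s - 1)] :=
        condExp_nonneg (Filter.Eventually.of_forall fun ω => sq_nonneg _)
      have hY2int : Integrable (fun ω => (Y s ω) ^ 2) μ := by
        refine Integrable.mono' (integrable_const (b ^ 2))
          (((hYm s hs).pow_const 2).aestronglyMeasurable)
          (Filter.Eventually.of_forall fun ω => ?_)
        rw [Real.norm_eq_abs, abs_pow, ← sq_abs b]
        exact pow_le_pow_left₀ (abs_nonneg _) ((hYbdd _ ω).trans (le_abs_self b)) 2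
      have h2 : μ[(fun ω' => (Y s ω') ^ 2) | ℱ (s - 1)]
          ≤ᵐ[μ] μ[(fun _ => b ^ 2) | ℱ (s - 1)] := by
        refine condExp_mono hY2int (integrable_const _)
          (Filter.Eventually.of_forall fun ω => ?_)
        show (Y s ω) ^ 2 ≤ b ^ 2
        have h0 := hYbdd s ω
        nlinarith [abs_nonneg (Y s ω), le_abs_self (Y s ω), neg_abs_le (Y s ω), sq_abs (Y s ω)]
      have h3 : μ[(fun _ : Ω => b ^ 2) | ℱ (s - 1)] = fun _ => b ^ 2 :=
        condExp_const (ℱ.le _) _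
      filter_upwards [h1, h2] with ω hω1 hω2
      intro _
      refine ⟨hω1, ?_⟩
      have := hω2
      rw [h3] at this
      exact this
    · filter_upwards with ω
      intro hs'; exact absurd hs' hs
  set Nset : Set Ω := toMeasurable μ {ω | ¬ ∀ s : ℕ, 1 ≤ s →
      (0 ≤ (μ[(fun ω' => (Y s ω') ^ 2) | ℱ (s - 1)]) ω ∧
        (μ[(fun ω' => (Y s ω') ^ 2) | ℱ (s - 1)]) ω ≤ b ^ 2)} with hNdef
  have hN0 : μ Nset = 0 := by
    rw [hNdef, measure_toMeasurable]
    exact hPae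
  -- the union of bad events
  set U : Set Ω := Nset ∪ ((⋃ n, Bp n) ∪ (⋃ n, Bm n)) with hUdef
  have hUm : MeasurableSet U := by
    refine ((measurableSet_toMeasurable _ _).union ?_)
    exact (MeasurableSet.iUnion hBpm).union (MeasurableSet.iUnion hBmm)
  -- bound on the measure of U
  have hUbound : μ U ≤ ENNReal.ofReal δ := by
    have h1 : μ (⋃ n, Bp n) ≤ ENNReal.ofReal (δ/2) := by
      calc μ (⋃ n, Bp n) ≤ ∑' n, μ (Bp n) := measure_iUnion_le _
      _ ≤ ∑' n : ℕ, ENNReal.ofReal (δ / (4 * Real.exp 1 * (12*(n:ℝ)^2+1))) := by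
          refine ENNReal.tsum_le_tsum fun n => ?_
          rw [← hA n]; exact hBp n
      _ ≤ ENNReal.ofReal (δ/2) := tsum_bound δ hδ
    have h2 : μ (⋃ n, Bm n) ≤ ENNReal.ofReal (δ/2) := by
      calc μ (⋃ n, Bm n) ≤ ∑' n, μ (Bm n) := measure_iUnion_le _
      _ ≤ ∑' n : ℕ, ENNReal.ofReal (δ / (4 * Real.exp 1 * (12*(n:ℝ)^2+1))) := by
          refine ENNReal.tsum_le_tsum fun n => ?_
          rw [← hA n]; exact hBm n
      _ ≤ ENNReal.ofReal (δ/2) := tsum_bound δ hδ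
    calc μ U ≤ μ Nset + μ ((⋃ n, Bp n) ∪ (⋃ n, Bm n)) := measure_union_le _ _
    _ ≤ 0 + (μ (⋃ n, Bp n) + μ (⋃ n, Bm n)) := by
        rw [hN0]; exact add_le_add le_rfl (measure_union_le _ _)
    _ ≤ 0 + (ENNReal.ofReal (δ/2) + ENNReal.ofReal (δ/2)) := by
        exact add_le_add le_rfl (add_le_add h1 h2)
    _ = ENNReal.ofReal δ := by
        rw [zero_add, ← ENNReal.ofReal_add (by positivity) (by positivity)]
        norm_num
  -- the complement of U is contained in the good event
  have hsub : Uᶜ ⊆ {ω | ∀ t : ℕ, 1 ≤ t →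
        |∑ s ∈ Finset.Icc 1 t, w s ω * Y s ω|
          ≤ Real.sqrt (2 * (∑ s ∈ Finset.Icc 1 t,
                (w s ω) ^ 2 * (μ[(fun ω' => (Y s ω') ^ 2) | ℱ (s - 1)]) ω)
              * Real.log (4 * Real.exp 1 * (2 * (t : ℝ) + 1) / δ))
            + 3 * b * Real.log (4 * Real.exp 1 * (2 * (t : ℝ) + 1) / δ)} := by
    intro ω hω
    rw [hUdef, Set.compl_union, Set.compl_union] at hω
    have hωN := hω.1
    have hωp := hω.2.1
    have hωm := hω.2.2
    have hP : ∀ s : ℕ, 1 ≤ s →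
        (0 ≤ (μ[(fun ω' => (Y s ω') ^ 2) | ℱ (s - 1)]) ω ∧
          (μ[(fun ω' => (Y s ω') ^ 2) | ℱ (s - 1)]) ω ≤ b ^ 2) := by
      by_contra hc
      exact hωN (subset_toMeasurable μ _ hc)
    intro t ht
    set Vt : ℝ := ∑ s ∈ Finset.Icc 1 t,
        (w s ω) ^ 2 * (μ[(fun ω' => (Y s ω') ^ 2) | ℱ (s - 1)]) ω with hVt0
    set st : ℝ := ∑ s ∈ Finset.Icc 1 t, w s ω * Y s ω with hst0
    have hV0 : 0 ≤ Vt := by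
      refine Finset.sum_nonneg fun s hs => ?_
      obtain ⟨hs1, _⟩ := Finset.mem_Icc.mp hs
      exact mul_nonneg (sq_nonneg _) (hP s hs1).1
    have hVt : Vt ≤ (t:ℝ) * b ^ 2 := by
      calc Vt ≤ ∑ s ∈ Finset.Icc 1 t, b ^ 2 := by
            refine Finset.sum_le_sum fun s hs => ?_
            obtain ⟨hs1, _⟩ := Finset.mem_Icc.mp hs
            have hw := hw01 s ω
            have h1 : (w s ω) ^ 2 ≤ 1 := by nlinarith [hw.1, hw.2]
            calc (w s ω) ^ 2 * (μ[(fun ω' => (Y s ω') ^ 2) | ℱ (s - 1)]) ω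
                ≤ 1 * (μ[(fun ω' => (Y s ω') ^ 2) | ℱ (s - 1)]) ω :=
                  mul_le_mul_of_nonneg_right h1 (hP s hs1).1
            _ = (μ[(fun ω' => (Y s ω') ^ 2) | ℱ (s - 1)]) ω := one_mul _
            _ ≤ b ^ 2 := (hP s hs1).2
      _ ≤ (t:ℝ) * b ^ 2 := by
          rw [Finset.sum_const, nsmul_eq_mul]
          refine mul_le_mul_of_nonneg_right ?_ (by positivity)
          have : (Finset.Icc 1 t).card ≤ t := by rw [Nat.card_Icc]; omega
          exact_mod_cast this
    -- upper bound for st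
    have hup : st ≤ Real.sqrt (2 * Vt * Real.log (4 * Real.exp 1 * (2 * (t:ℝ) + 1) / δ))
        + 3 * b * Real.log (4 * Real.exp 1 * (2 * (t:ℝ) + 1) / δ) := by
      refine grid_bound hb hδ hδ1 ht hV0 hVt fun n => ?_
      have h1 : ω ∉ Bp n := fun hmem => hωp (Set.mem_iUnion.mpr ⟨n, hmem⟩)
      rw [hBpdef] at h1
      simp only [Set.mem_setOf_eq, not_exists, not_lt] at h1
      exact h1 t
    -- lower bound for st
    have hdn : st = -(∑ s ∈ Finset.Icc 1 t, w s ω * Y' s ω) := by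
      rw [hst0, ← Finset.sum_neg_distrib]
      refine Finset.sum_congr rfl fun s _ => ?_
      rw [hY'def]; ring
    have hVeq : ∀ k : ℕ, (∑ s ∈ Finset.Icc 1 k,
        (w s ω) ^ 2 * (μ[(fun ω' => (Y' s ω') ^ 2) | ℱ (s - 1)]) ω) = ∑ s ∈ Finset.Icc 1 k,
        (w s ω) ^ 2 * (μ[(fun ω' => (Y s ω') ^ 2) | ℱ (s - 1)]) ω := by
      intro k
      refine Finset.sum_congr rfl fun s _ => ?_
      congr 2
      funext ω'
      rw [hY'def]
      ring
    have hlow : -st ≤ Real.sqrt (2 * Vt * Real.log (4 * Real.exp 1 * (2 * (t:ℝ) + 1) / δ))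
        + 3 * b * Real.log (4 * Real.exp 1 * (2 * (t:ℝ) + 1) / δ) := by
      refine grid_bound hb hδ hδ1 ht hV0 hVt fun n => ?_
      have h1 : ω ∉ Bm n := fun hmem => hωm (Set.mem_iUnion.mpr ⟨n, hmem⟩)
      rw [hBmdef] at h1
      simp only [Set.mem_setOf_eq, not_exists, not_lt] at h1
      have h2 := h1 t
      rw [hVeq t] at h2
      rw [hdn]
      convert h2 using 3
      · rfl
      rw [neg_neg]
    rw [abs_le]
    constructor
    · linarith
    · exact hup
  -- conclude
  calc ENNReal.ofReal (1 - δ) ≤ 1 - ENNReal.ofReal δ := by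
        refine ENNReal.le_sub_of_add_le_right ENNReal.ofReal_ne_top ?_
        rw [← ENNReal.ofReal_add (by linarith) hδ.le]
        rw [show 1 - δ + δ = 1 by ring]
        simp
  _ ≤ 1 - μ U := tsub_le_tsub_left hUbound 1
  _ = μ Uᶜ := (prob_compl_eq_one_sub hUm).symm
  _ ≤ _ := measure_mono hsub
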